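/- Define k(a,b) := (a − b + √((a−b)² + π a b))/a for a, b > 0, so that the Cheeger constant of the rectangle (−b,b)×(−a,a) equals 1/a + k(a,b)/(2b). Then for fixed a, the function b ↦ k(a,b) is strictly decreasing in b. -/
import Mathlib


open Real

/-- `k a b` measures the deviation of the rectangle's Cheeger constant from `1/a`. -/
noncomputable def rectK (a b : ℝ) : ℝ :=
  (a - b + Real.sqrt ((a - b) ^ 2 + π * a * b)) / a

theorem rectK_strictAnti (a : ℝ) (ha : 0 < a) :
    StrictAntiOn (fun b => rectK a b) (Set.Ioi (0 : ℝ)) := by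
  intro b₁ hb₁ b₂ hb₂ hlt
  simp only [Set.mem_Ioi] at hb₁ hb₂
  have hπ4 : π < 4 := by linarith [Real.pi_lt_d2]
  have hπ2 : 2 < π := by linarith [Real.pi_gt_three]
  have hg₁ : 0 ≤ (a - b₁) ^ 2 + π * a * b₁ := by positivity
  have hs₁ : Real.sqrt ((a - b₁) ^ 2 + π * a * b₁) ^ 2 = (a - b₁) ^ 2 + π * a * b₁ :=
    Real.sq_sqrt hg₁
  have hs₁n : 0 ≤ Real.sqrt ((a - b₁) ^ 2 + π * a * b₁) := Real.sqrt_nonneg _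
  have h2 : b₁ + (π - 2) * a / 2 < Real.sqrt ((a - b₁) ^ 2 + π * a * b₁) := by
    nlinarith [hs₁, hs₁n, mul_pos ha hb₁, mul_pos (mul_pos ha ha)
      (mul_pos (sub_pos.mpr hπ4) Real.pi_pos)]
  have key : Real.sqrt ((a - b₂) ^ 2 + π * a * b₂)
      < Real.sqrt ((a - b₁) ^ 2 + π * a * b₁) + (b₂ - b₁) := by
    rw [show Real.sqrt ((a - b₁) ^ 2 + π * a * b₁) + (b₂ - b₁)
        = Real.sqrt ((a - b₁) ^ 2 + π * a * b₁) + (b₂ - b₁) from rfl]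
    have hy : 0 < Real.sqrt ((a - b₁) ^ 2 + π * a * b₁) + (b₂ - b₁) := by linarith
    rw [show (Real.sqrt ((a - b₂) ^ 2 + π * a * b₂)
        < Real.sqrt ((a - b₁) ^ 2 + π * a * b₁) + (b₂ - b₁))
        ↔ ((a - b₂) ^ 2 + π * a * b₂
        < (Real.sqrt ((a - b₁) ^ 2 + π * a * b₁) + (b₂ - b₁)) ^ 2)
      from Real.sqrt_lt' hy]
    nlinarith [hs₁, h2, mul_pos ha hb₁]
  simp only [rectK]
  rw [div_lt_div_iff_of_pos_right ha]
  linarith
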